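/- A ring R is a CSNC ring if and only if the following two conditions hold: (1) the element 2 of R is nilpotent; and (2) for every clean element a of R there exists a natural number k ≥ 0 such that a^(2^k) - a^(2^(k+1)) is nilpotent. -/

import Mathlib

/-- An element `a` of a ring is *clean* if `a = e + u` for some idempotent `e` and unit `u`. -/
def IsCleanElem {R : Type*} [Ring R] (a : R) : Prop :=
  ∃ e u : R, IsIdempotentElem e ∧ IsUnit u ∧ a = e + u

/-- An element `a` of a ring is *strongly nil-clean* if `a = e + q` for some idempotent `e`
and nilpotent `q` with `e * q = q * e`. -/
def IsStronglyNilCleanElem {R : Type*} [Ring R] (a : R) : Prop :=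
  ∃ e q : R, IsIdempotentElem e ∧ IsNilpotent q ∧ e * q = q * e ∧ a = e + q

/-- A ring is a *CSNC ring* if every clean element is strongly nil-clean. -/
def IsCSNCRing (R : Type*) [Ring R] : Prop :=
  ∀ a : R, IsCleanElem a → IsStronglyNilCleanElem a

open Polynomial

private lemma aeval_comm {R : Type*} [Ring R] (a : R) (p q : Polynomial ℤ) :
    Commute (Polynomial.aeval a p) (Polynomial.aeval a q) := by
  unfold Commute SemiconjBy
  rw [← map_mul, ← map_mul, mul_comm]

/-- `2 ∣ (X - X²)^(2^k) - (X^(2^k) - X^(2^(k+1)))` in `ℤ[X]`. -/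
private lemma dvd_two_pow (k : ℕ) :
    (2 : Polynomial ℤ) ∣
      ((X : Polynomial ℤ) - X ^ 2) ^ 2 ^ k - (X ^ 2 ^ k - X ^ 2 ^ (k + 1)) := by
  induction k with
  | zero => simp
  | succ k ih =>
    have h1 : (X : Polynomial ℤ) ^ 2 ^ (k + 1) = (X ^ 2 ^ k) ^ 2 := by
      rw [← pow_mul, ← pow_succ]
    have h2 : (X : Polynomial ℤ) ^ 2 ^ (k + 2) = (X ^ 2 ^ k) ^ 4 := by
      rw [← pow_mul]
      congr 1
      rw [pow_succ, pow_succ]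
      ring
    have h3 : ((X : Polynomial ℤ) - X ^ 2) ^ 2 ^ (k + 1) =
        (((X : Polynomial ℤ) - X ^ 2) ^ 2 ^ k) ^ 2 := by
      rw [← pow_mul, ← pow_succ]
    rw [h1] at ih
    set y := (X : Polynomial ℤ) ^ 2 ^ k with hy
    set A := ((X : Polynomial ℤ) - X ^ 2) ^ 2 ^ k with hA
    have key : A ^ 2 - ((X : Polynomial ℤ) ^ 2 ^ (k + 1) - X ^ 2 ^ (k + 1 + 1)) =
        (A - (y - y ^ 2)) * (A + (y - y ^ 2)) + 2 * (y ^ 4 - y ^ 3) := by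
      rw [h1, show (k + 1 + 1) = k + 2 from rfl, h2]
      ring
    rw [h3, key]
    exact dvd_add (ih.mul_right _) (Dvd.intro _ rfl)

/-- If `2` is nilpotent and `a^(2^k) - a^(2^(k+1))` is nilpotent, then `a - a²` is nilpotent. -/
private lemma nilpotent_sub_sq {R : Type*} [Ring R] {a : R} (h2 : IsNilpotent (2 : R)) {k : ℕ}
    (h : IsNilpotent (a ^ 2 ^ k - a ^ 2 ^ (k + 1))) : IsNilpotent (a - a ^ 2) := by
  obtain ⟨C, hC⟩ := dvd_two_pow k
  have hval := congrArg (Polynomial.aeval a) hC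
  simp only [map_sub, map_pow, map_mul, Polynomial.aeval_X] at hval
  rw [map_ofNat (Polynomial.aeval a) 2] at hval
  -- hval : (a - a^2)^(2^k) - (a^(2^k) - a^(2^(k+1))) = 2 * aeval a C
  have heq : (a - a ^ 2) ^ 2 ^ k =
      (a ^ 2 ^ k - a ^ 2 ^ (k + 1)) + 2 * Polynomial.aeval a C := by
    rw [← hval]; abel
  have hcomm : Commute (a ^ 2 ^ k - a ^ 2 ^ (k + 1)) (2 * Polynomial.aeval a C) := by
    have hh := aeval_comm a ((X : Polynomial ℤ) ^ 2 ^ k - X ^ 2 ^ (k + 1)) (2 * C)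
    simp only [map_sub, map_pow, map_mul, Polynomial.aeval_X] at hh
    rwa [map_ofNat (Polynomial.aeval a) 2] at hh
  have h2c : IsNilpotent ((2 : R) * Polynomial.aeval a C) :=
    (Commute.ofNat_left 2 _).isNilpotent_mul_right h2
  have hnil : IsNilpotent ((a - a ^ 2) ^ 2 ^ k) := by
    rw [heq]
    exact hcomm.isNilpotent_add h h2c
  exact hnil.of_pow

/-- If `a - a²` is nilpotent, then `a` is strongly nil-clean. -/
private lemma stronglyNilClean_of_nilpotent {R : Type*} [Ring R] {a : R}
    (h : IsNilpotent (a - a ^ 2)) : IsStronglyNilCleanElem a := by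
  obtain ⟨n, hn⟩ := h
  set m := n + 1 with hm
  have hn' : (a - a ^ 2) ^ m = 0 := by rw [hm, pow_succ, hn, zero_mul]
  have he : IsIdempotentElem (1 - (1 - a ^ m) ^ m) :=
    isIdempotentElem_one_sub_one_sub_pow_pow a m hn'
  set e := 1 - (1 - a ^ m) ^ m with hedef
  have hca : Commute a e := by
    rw [hedef]
    exact (Commute.one_right a).sub_right
      (((Commute.one_right a).sub_right ((Commute.refl a).pow_right m)).pow_right m)
  -- polynomial divisibility: X - X² divides X - P where P = 1 - (1 - X^m)^m
  set P : Polynomial ℤ := 1 - (1 - X ^ m) ^ m with hP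
  have hm0 : m ≠ 0 := Nat.succ_ne_zero n
  have hXP : (X : Polynomial ℤ) ∣ X - P := by
    refine dvd_sub (dvd_refl _) ?_
    have h1 : ((1 : Polynomial ℤ) - (1 - X ^ m)) ∣ 1 ^ m - (1 - X ^ m) ^ m :=
      sub_dvd_pow_sub_pow _ _ m
    rw [sub_sub_cancel, one_pow] at h1
    exact dvd_trans (dvd_pow_self _ hm0) h1
  have h1XP : ((1 : Polynomial ℤ) - X) ∣ X - P := by
    have h1 : ((1 : Polynomial ℤ) - X) ∣ 1 - X ^ m := by
      have := sub_dvd_pow_sub_pow (1 : Polynomial ℤ) X m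
      rwa [one_pow] at this
    have h2 : ((1 : Polynomial ℤ) - X) ∣ (1 - X ^ m) ^ m := dvd_pow h1 hm0
    have h3 : ((1 : Polynomial ℤ) - X) ∣ X - 1 := ⟨-1, by ring⟩
    have h4 : (X : Polynomial ℤ) - P = (X - 1) + (1 - X ^ m) ^ m := by rw [hP]; ring
    rw [h4]
    exact dvd_add h3 h2
  have hcop : IsCoprime (X : Polynomial ℤ) (1 - X) := ⟨1, 1, by ring⟩
  have hdvd : ((X : Polynomial ℤ) - X ^ 2) ∣ X - P := by
    have hmul := hcop.mul_dvd hXP h1XP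
    have heq2 : (X : Polynomial ℤ) * (1 - X) = X - X ^ 2 := by ring
    rwa [heq2] at hmul
  obtain ⟨D, hD⟩ := hdvd
  have hae : Polynomial.aeval a (X - P) = a - e := by
    rw [hP, hedef]
    simp
  have haq : a - e = (a - a ^ 2) * Polynomial.aeval a D := by
    rw [← hae, hD, map_mul]
    congr 1
    simp
  have hqnil : IsNilpotent (a - e) := by
    rw [haq]
    have hc : Commute (a - a ^ 2) (Polynomial.aeval a D) := by
      have hh := aeval_comm a ((X : Polynomial ℤ) - X ^ 2) D
      simpa using hh
    exact hc.isNilpotent_mul_right ⟨n, hn⟩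
  exact ⟨e, a - e, he, hqnil, (hca.symm.sub_right (Commute.refl e)), by abel⟩

theorem stmt_14 (R : Type*) [Ring R] :
    IsCSNCRing R ↔
      IsNilpotent (2 : R) ∧
        ∀ a : R, IsCleanElem a → ∃ k : ℕ, IsNilpotent (a ^ 2 ^ k - a ^ 2 ^ (k + 1)) := by
  constructor
  · intro h
    constructor
    · -- 2 is nilpotent
      obtain ⟨e, q, he, hq, hcomm, hsum⟩ :=
        h (-1) ⟨0, -1, IsIdempotentElem.zero, isUnit_one.neg, by abel⟩
      have heq : e = -1 - q := eq_sub_of_add_eq hsum.symm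
      have he' : 1 + 2 * q + q * q = -1 - q := by
        have hee := he
        rw [IsIdempotentElem, heq] at hee
        have expand : (-1 - q) * (-1 - q) = 1 + 2 * q + q * q := by noncomm_ring
        rw [expand] at hee
        exact hee
      have h3 : (2 : R) + q * (3 + q) = 0 := by
        have step : (2 : R) + q * (3 + q) = (1 + 2 * q + q * q) - (-1 - q) := by
          noncomm_ring
          simp [nsmul_eq_mul]
          noncomm_ring
        rw [step, he', sub_self]
      have h2 : (2 : R) = -(q * (3 + q)) := eq_neg_of_add_eq_zero_left h3
      rw [h2]
      have hc : Commute q (3 + q) := (Commute.ofNat_right q 3).add_right (Commute.refl q)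
      exact (hc.isNilpotent_mul_right hq).neg
    · -- the nilpotency condition with k = 0
      intro a ha
      obtain ⟨e, q, he, hq, hcomm, hsum⟩ := h a ha
      refine ⟨0, ?_⟩
      have hee : e * e = e := he
      have key : a ^ 2 ^ 0 - a ^ 2 ^ 1 = q * (1 - 2 * e - q) := by
        have hpow : (2 : ℕ) ^ 0 = 1 := rfl
        have hpow1 : (2 : ℕ) ^ 1 = 2 := rfl
        rw [hpow, hpow1, pow_one, hsum]
        have h6 : (e + q) ^ 2 = e * e + e * q + q * e + q * q := by noncomm_ring
        rw [h6, hee, hcomm]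
        noncomm_ring
      rw [key]
      have hqe : Commute q e := (Commute.symm hcomm)
      have hc : Commute q (1 - 2 * e - q) :=
        ((Commute.one_right q).sub_right ((Commute.ofNat_right q 2).mul_right hqe)).sub_right
          (Commute.refl q)
      exact hc.isNilpotent_mul_right hq
  · rintro ⟨h2, hcond⟩ a ha
    obtain ⟨k, hk⟩ := hcond a ha
    exact stronglyNilClean_of_nilpotent (nilpotent_sub_sq h2 hk)
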